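/- Let n ≥ 1 be a natural number, let (Ω, μ) be a probability space, and let X_1, ..., X_n : Ω → ℕ be mutually independent random variables such that for each i ∈ {1,...,n}, X_i has the geometric distribution on {1,2,...} with success probability 1/(n-i+1), i.e. μ(X_i = 0) = 0 and μ(X_i = k) = ((n-i)/(n-i+1))^{k-1} · (1/(n-i+1)) for all k ≥ 1. Then T = X_1 + ... + X_n satisfies E[T] = n(n+1)/2 and Var(T) = n(n-1)(n+1)/3. -/

import Mathlib

open MeasureTheory ProbabilityTheory ENNReal
set_option maxHeartbeats 1000000

lemma choose_two_real (k : ℕ) : (((k+2).choose 2 : ℕ) : ℝ) = ((k:ℝ)+2)*((k:ℝ)+1)/2 := by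
  have hdvd : (2:ℕ) ∣ (k+2)*(k+1) := by
    rw [mul_comm]; exact (Nat.even_mul_succ_self (k+1)).two_dvd
  have h : (k+2).choose 2 = (k+2)*(k+1)/2 := by
    rw [Nat.choose_two_right]; rfl
  rw [h, Nat.cast_div hdvd (by norm_num)]
  push_cast; ring

lemma geom_lintegral {Ω : Type*} [MeasurableSpace Ω] (μ : Measure Ω)
    (Y : Ω → ℕ) (hY : Measurable Y) (g : ℕ → ℝ≥0∞) :
    ∫⁻ ω, g (Y ω) ∂μ = ∑' k, g k * μ {ω | Y ω = k} := by
  rw [← lintegral_map (measurable_from_nat) hY, lintegral_countable' g]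
  refine tsum_congr fun k => ?_
  rw [Measure.map_apply hY (measurableSet_singleton k)]
  rfl

lemma geom_core {Ω : Type*} [MeasurableSpace Ω] (μ : Measure Ω) [IsProbabilityMeasure μ]
    (Y : Ω → ℕ) (hY : Measurable Y) (r : ℝ) (hr : 1 ≤ r)
    (h0 : μ {ω | Y ω = 0} = 0)
    (hg : ∀ k : ℕ, 1 ≤ k → μ {ω | Y ω = k}
      = ENNReal.ofReal (((r-1)/r)^(k-1) * (1/r))) :
    MemLp (fun ω => (Y ω : ℝ)) 2 μ ∧ (∫ ω, (Y ω : ℝ) ∂μ) = r ∧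
      variance (fun ω => (Y ω : ℝ)) μ = r^2 - r := by
  have hr0 : 0 < r := lt_of_lt_of_le one_pos hr
  set q : ℝ := (r-1)/r with hqdef
  set p : ℝ := 1/r with hpdef
  have hq0 : 0 ≤ q := div_nonneg (by linarith) hr0.le
  have hq1 : q < 1 := by
    rw [hqdef, div_lt_one hr0]; linarith
  have h1q : 1 - q = p := by
    rw [hqdef, hpdef]; field_simp; ring
  have hp0 : 0 < p := by rw [hpdef]; positivity
  have hqn : ‖q‖ < 1 := by rwa [Real.norm_eq_abs, abs_of_nonneg hq0]
  -- real series
  have hB : HasSum (fun k : ℕ => (((k+1).choose 1 : ℕ) : ℝ) * q ^ k) (1/(1-q)^2) :=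
    hasSum_choose_mul_geometric_of_norm_lt_one 1 hqn
  have hA : HasSum (fun k : ℕ => (((k+2).choose 2 : ℕ) : ℝ) * q ^ k) (1/(1-q)^3) :=
    hasSum_choose_mul_geometric_of_norm_lt_one 2 hqn
  have hS1 : HasSum (fun k : ℕ => ((k:ℝ)+1) * (q ^ k * p)) r := by
    have := hB.mul_right p
    have e : (fun k : ℕ => (((k+1).choose 1 : ℕ) : ℝ) * q ^ k * p)
        = fun k : ℕ => ((k:ℝ)+1) * (q ^ k * p) := by
      funext k; simp [Nat.choose_one_right, mul_assoc]
    rw [e] at this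
    have hr' : r = 1 / (1 - q) ^ 2 * p := by
      rw [h1q, hpdef]
      field_simp
    rw [hr']; exact this
  have hS2 : HasSum (fun k : ℕ => ((k:ℝ)+1)^2 * (q ^ k * p)) (2*r^2 - r) := by
    have := ((hA.mul_left 2).sub hB).mul_right p
    have e : (fun k : ℕ => (2 * ((((k+2).choose 2 : ℕ) : ℝ) * q ^ k)
        - (((k+1).choose 1 : ℕ) : ℝ) * q ^ k) * p)
        = fun k : ℕ => ((k:ℝ)+1)^2 * (q ^ k * p) := by
      funext k
      rw [choose_two_real]
      simp [Nat.choose_one_right]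
      ring
    rw [e] at this
    have hr' : 2 * r ^ 2 - r = (2 * (1 / (1 - q) ^ 3) - 1 / (1 - q) ^ 2) * p := by
      rw [h1q, hpdef]
      field_simp
    rw [hr']; exact this
  -- lintegral computations
  have hgk : ∀ k : ℕ, μ {ω | Y ω = k + 1} = ENNReal.ofReal (q ^ k * p) := by
    intro k
    rw [hg (k+1) (by omega)]
    simp
  have key : ∀ (c : ℕ → ℝ), c 0 = 0 → (∀ k, 0 ≤ c k) → ∀ S : ℝ,
      HasSum (fun k : ℕ => c (k+1) * (q ^ k * p)) S →
      ∫⁻ ω, ENNReal.ofReal (c (Y ω)) ∂μ = ENNReal.ofReal S := by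
    intro c hc0 hcpos S hS
    rw [geom_lintegral μ Y hY (fun k => ENNReal.ofReal (c k))]
    rw [tsum_eq_zero_add' ENNReal.summable]
    simp only [hc0, ENNReal.ofReal_zero, zero_mul, zero_add, hgk]
    have : ∀ k : ℕ, ENNReal.ofReal (c (k+1)) * ENNReal.ofReal (q ^ k * p)
        = ENNReal.ofReal (c (k+1) * (q ^ k * p)) := fun k =>
      (ENNReal.ofReal_mul (hcpos _)).symm
    rw [tsum_congr this, ← ENNReal.ofReal_tsum_of_nonneg
      (fun k => mul_nonneg (hcpos _) (mul_nonneg (pow_nonneg hq0 _) hp0.le)) hS.summable,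
      hS.tsum_eq]
  have M1 : ∫⁻ ω, ENNReal.ofReal ((Y ω : ℝ)) ∂μ = ENNReal.ofReal r := by
    apply key (fun k => (k : ℝ)) (by simp) (fun k => by positivity) r
    convert hS1 using 2 with k
    push_cast; ring
  have M2 : ∫⁻ ω, ENNReal.ofReal (((Y ω : ℝ))^2) ∂μ = ENNReal.ofReal (2*r^2 - r) := by
    apply key (fun k => (k : ℝ)^2) (by simp) (fun k => by positivity) _
    convert hS2 using 2 with k
    push_cast; ring
  -- measurability
  have hm : Measurable (fun ω => (Y ω : ℝ)) := (measurable_from_nat).comp hY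
  have hasm : AEStronglyMeasurable (fun ω => (Y ω : ℝ)) μ := hm.aestronglyMeasurable
  have hnn : (0 : Ω → ℝ) ≤ᵐ[μ] fun ω => (Y ω : ℝ) :=
    Filter.Eventually.of_forall fun ω => by positivity
  have hnn2 : (0 : Ω → ℝ) ≤ᵐ[μ] fun ω => ((Y ω : ℝ))^2 :=
    Filter.Eventually.of_forall fun ω => by positivity
  have hint1 : ∫ ω, (Y ω : ℝ) ∂μ = r := by
    rw [integral_eq_lintegral_of_nonneg_ae hnn hasm, M1, ENNReal.toReal_ofReal hr0.le]
  have hint2 : ∫ ω, ((Y ω : ℝ))^2 ∂μ = 2*r^2 - r := by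
    rw [integral_eq_lintegral_of_nonneg_ae hnn2 (hasm.pow 2), M2,
      ENNReal.toReal_ofReal (by nlinarith)]
  have hintsq : Integrable (fun ω => ((Y ω : ℝ))^2) μ := by
    refine ⟨(hasm.pow 2), ?_⟩
    rw [hasFiniteIntegral_iff_ofReal hnn2, M2]
    exact ENNReal.ofReal_lt_top
  have hmem : MemLp (fun ω => (Y ω : ℝ)) 2 μ :=
    (memLp_two_iff_integrable_sq hasm).2 hintsq
  refine ⟨hmem, hint1, ?_⟩
  rw [variance_eq_sub hmem]
  have : (fun ω => (Y ω : ℝ))^2 = fun ω => ((Y ω : ℝ))^2 := by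
    funext ω; simp
  rw [this, hint2, hint1]
  ring

lemma sum_range_lin (n : ℕ) : ∑ j ∈ Finset.range n, ((j:ℝ)+1) = n*(n+1)/2 := by
  induction n with
  | zero => simp
  | succ m ih => rw [Finset.sum_range_succ, ih]; push_cast; ring

lemma sum_range_quad (n : ℕ) :
    ∑ j ∈ Finset.range n, (((j:ℝ)+1)^2 - ((j:ℝ)+1)) = n*((n:ℝ)-1)*(n+1)/3 := by
  induction n with
  | zero => simp
  | succ m ih => rw [Finset.sum_range_succ, ih]; push_cast; ring

lemma sum_reflect (n : ℕ) (f : ℝ → ℝ) :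
    ∑ i ∈ Finset.range n, f ((n:ℝ) - i) = ∑ j ∈ Finset.range n, f ((j:ℝ)+1) := by
  rw [← Finset.sum_range_reflect (fun i => f ((n:ℝ) - i)) n]
  refine Finset.sum_congr rfl fun j hj => ?_
  rw [Finset.mem_range] at hj
  congr 1
  have h1 : n - 1 - j = n - (j+1) := by omega
  rw [h1, Nat.cast_sub (by omega)]
  push_cast
  ring


/-- Totally random strategy in the case `N = n`: expectation and variance of the total number of
trials.  The variable `X i` (for `i : Fin n`, corresponding to the `(i+1)`-th lock) is geometric
on `{1,2,...}` with success probability `1/(n-i)`. -/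
theorem totally_random_equal_case
    (n : ℕ) (hn : 1 ≤ n)
    {Ω : Type*} [MeasurableSpace Ω] (μ : Measure Ω) [IsProbabilityMeasure μ]
    (X : Fin n → Ω → ℕ) (hX : ∀ i, Measurable (X i))
    (hindep : iIndepFun X μ)
    (h0 : ∀ i, μ {ω | X i ω = 0} = 0)
    (hgeom : ∀ i : Fin n, ∀ k : ℕ, 1 ≤ k →
      μ {ω | X i ω = k}
        = ENNReal.ofReal
            ((((n : ℝ) - (i : ℕ) - 1) / ((n : ℝ) - (i : ℕ))) ^ (k - 1)
              * (1 / ((n : ℝ) - (i : ℕ))))) :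
    (∫ ω, ((∑ i, X i ω : ℕ) : ℝ) ∂μ) = (n : ℝ) * ((n : ℝ) + 1) / 2 ∧
      variance (fun ω => ((∑ i, X i ω : ℕ) : ℝ)) μ
        = (n : ℝ) * ((n : ℝ) - 1) * ((n : ℝ) + 1) / 3 := by
  have hri : ∀ i : Fin n, 1 ≤ (n:ℝ) - (i:ℕ) := by
    intro i
    have h := i.isLt
    have : ((i:ℕ):ℝ) + 1 ≤ (n:ℝ) := by exact_mod_cast h
    linarith
  have hcore := fun i : Fin n =>
    geom_core μ (X i) (hX i) ((n:ℝ) - (i:ℕ)) (hri i) (h0 i) (hgeom i)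
  have hsum_eq : (fun ω => ((∑ i, X i ω : ℕ) : ℝ))
      = ∑ i, (fun ω => (X i ω : ℝ)) := by
    funext ω
    rw [Finset.sum_apply]
    push_cast
    rfl
  constructor
  · have h1 : (∫ ω, ((∑ i, X i ω : ℕ) : ℝ) ∂μ)
        = ∑ i, ∫ ω, (X i ω : ℝ) ∂μ := by
      rw [show (fun ω => ((∑ i, X i ω : ℕ) : ℝ)) = fun ω => ∑ i, (X i ω : ℝ) by
        funext ω; push_cast; rfl]
      exact integral_finset_sum _ fun i _ => ((hcore i).1.integrable one_le_two)
    rw [h1]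
    have h2 : ∑ i : Fin n, ∫ ω, (X i ω : ℝ) ∂μ = ∑ i : Fin n, ((n:ℝ) - (i:ℕ)) :=
      Finset.sum_congr rfl fun i _ => (hcore i).2.1
    rw [h2, Fin.sum_univ_eq_sum_range (fun i => (n:ℝ) - i) n,
      sum_reflect n (fun x => x), sum_range_lin]
  · rw [hsum_eq]
    rw [IndepFun.variance_sum (fun i _ => (hcore i).1)
      (fun i _ j _ hij => (hindep.indepFun hij).comp measurable_from_nat measurable_from_nat)]
    have h2 : ∑ i : Fin n, variance (fun ω => (X i ω : ℝ)) μ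
        = ∑ i : Fin n, (((n:ℝ) - (i:ℕ))^2 - ((n:ℝ) - (i:ℕ))) :=
      Finset.sum_congr rfl fun i _ => (hcore i).2.2
    rw [h2, Fin.sum_univ_eq_sum_range (fun i => ((n:ℝ) - i)^2 - ((n:ℝ) - i)) n,
      sum_reflect n (fun x => x^2 - x), sum_range_quad]
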